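/- A finite connected simple graph G satisfies cdim(G) = 1 if and only if G is the complete graph K_2 on two vertices. -/

import Mathlib

open SimpleGraph

namespace ConnDim

open Classical in
/-- The local connectivity `κ(a,b)`: the maximum number of internally vertex-disjoint
`a`-`b` paths, with `κ(a,a) = ∞`. -/
noncomputable def localConn {V : Type*} (G : SimpleGraph V) (a b : V) : ℕ∞ :=
  if a = b then ⊤
  else sSup {n : ℕ∞ | ∃ Ps : Finset (G.Path a b),
    (∀ p ∈ Ps, ∀ q ∈ Ps, p ≠ q → ∀ x : V,
        x ∈ p.1.support → x ∈ q.1.support → x = a ∨ x = b) ∧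
    (Ps.card : ℕ∞) = n}

/-- A set `W` is connectivity resolving if vertices are determined by their
local connectivities to the elements of `W`. -/
def ConnResolving {V : Type*} (G : SimpleGraph V) (W : Set V) : Prop :=
  ∀ u v : V, (∀ w ∈ W, localConn G u w = localConn G v w) → u = v

/-- The connectivity dimension: minimum cardinality of a connectivity resolving set. -/
noncomputable def cdim {V : Type*} (G : SimpleGraph V) : ℕ :=
  sInf {n : ℕ | ∃ W : Set V, ConnResolving G W ∧ W.ncard = n}

/-- A set `W` is metric resolving if vertices are determined by their distances
to the elements of `W`. -/
def MetricResolving {V : Type*} (G : SimpleGraph V) (W : Set V) : Prop :=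
  ∀ u v : V, (∀ w ∈ W, G.dist u w = G.dist v w) → u = v

/-- The metric dimension: minimum cardinality of a metric resolving set. -/
noncomputable def mdim {V : Type*} (G : SimpleGraph V) : ℕ :=
  sInf {n : ℕ | ∃ W : Set V, MetricResolving G W ∧ W.ncard = n}

/-- `G` forces a `𝟙` representation if every minimum resolving set (basis) `B` admits a
vertex whose local connectivity to every element of `B` equals `1`. -/
def ForcesOne {V : Type*} (G : SimpleGraph V) : Prop :=
  ∀ B : Set V, ConnResolving G B → B.ncard = cdim G →
    ∃ v : V, ∀ b ∈ B, localConn G v b = 1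

/-- A cut vertex of a connected graph: its removal disconnects the graph. -/
def IsCutVertex {V : Type*} (G : SimpleGraph V) (v : V) : Prop :=
  G.Connected ∧ ¬ (G.induce {u : V | u ≠ v}).Connected

/-- A block of `G`: a maximal connected subgraph of `G` without a cut vertex of itself. -/
def IsBlock {V : Type*} (G : SimpleGraph V) (H : G.Subgraph) : Prop :=
  H.coe.Connected ∧ (∀ v, ¬ IsCutVertex H.coe v) ∧
  ∀ H' : G.Subgraph, H ≤ H' → H'.coe.Connected → (∀ v, ¬ IsCutVertex H'.coe v) → H' = H

/-- The number of blocks of `G`. -/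
noncomputable def numBlocks {V : Type*} (G : SimpleGraph V) : ℕ :=
  Nat.card {H : G.Subgraph // IsBlock G H}

/-- Two vertices are twins if they have the same neighborhood in the graph with
both of them deleted. -/
def AreTwins {V : Type*} (G : SimpleGraph V) (a b : V) : Prop :=
  ∀ x : V, x ≠ a → x ≠ b → (G.Adj a x ↔ G.Adj b x)

/-- The threshold graph generated by a binary sequence `L` (`false` = isolated vertex,
`true` = dominating vertex): two vertices are adjacent iff the later one was added
as a dominating vertex. -/
def thresholdGraph (L : List Bool) : SimpleGraph (Fin L.length) :=
  SimpleGraph.fromRel (fun i j => i < j ∧ L.get j = true)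

/-- The alternating binary sequence `0,1,0,1,…,0,1` of length `2 * n`. -/
def altList (n : ℕ) : List Bool := (List.replicate n [false, true]).flatten

/-- The join of two graphs on disjoint vertex sets by the bridge `v₁v₂`. -/
def bridgeJoin {V₁ V₂ : Type*} (G₁ : SimpleGraph V₁) (G₂ : SimpleGraph V₂)
    (v₁ : V₁) (v₂ : V₂) : SimpleGraph (V₁ ⊕ V₂) :=
  G₁.map Function.Embedding.inl ⊔ G₂.map Function.Embedding.inr
    ⊔ SimpleGraph.fromEdgeSet {s(Sum.inl v₁, Sum.inr v₂)}

/-- The graph obtained from `G` by attaching a new leaf (the vertex `none`) to `u`. -/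
def attachLeaf {V : Type*} (G : SimpleGraph V) (u : V) : SimpleGraph (Option V) :=
  G.map Function.Embedding.some ⊔ SimpleGraph.fromEdgeSet {s(some u, (none : Option V))}

/-- The chain of `t` triangles (triangle `i` has vertices `inl i.castSucc`, `inl i.succ`,
`inr (inl i)`), with a leaf `inr (inr ())` attached to the end vertex `inl 0`. -/
def triChain (t : ℕ) : SimpleGraph (Fin (t+1) ⊕ Fin t ⊕ Unit) :=
  SimpleGraph.fromRel (fun a b =>
    match a, b with
    | Sum.inl i, Sum.inl j => (i : ℕ) + 1 = (j : ℕ)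
    | Sum.inr (Sum.inl i), Sum.inl j => j = Fin.castSucc i ∨ j = Fin.succ i
    | Sum.inr (Sum.inr _), Sum.inl j => j = 0
    | _, _ => False)

/-- auxiliary: the defining set -/
def pset {V : Type*} (G : SimpleGraph V) (a b : V) : Set ℕ∞ :=
  {n : ℕ∞ | ∃ Ps : Finset (G.Path a b),
    (∀ p ∈ Ps, ∀ q ∈ Ps, p ≠ q → ∀ x : V,
        x ∈ p.1.support → x ∈ q.1.support → x = a ∨ x = b) ∧
    (Ps.card : ℕ∞) = n}

lemma localConn_eq {V : Type*} (G : SimpleGraph V) {a b : V} (h : a ≠ b) :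
    localConn G a b = sSup (pset G a b) := by
  rw [localConn, if_neg h]; rfl

lemma localConn_self {V : Type*} (G : SimpleGraph V) (a : V) : localConn G a a = ⊤ :=
  if_pos rfl

lemma snd_adj {V : Type*} {G : SimpleGraph V} {u w : V} (hne : u ≠ w) (p : G.Walk u w) :
    G.Adj u (p.getVert 1) :=
  p.adj_snd (Walk.not_nil_of_ne hne)

lemma snd_mem_support {V : Type*} {G : SimpleGraph V} {u w : V} (hne : u ≠ w)
    (p : G.Walk u w) : p.getVert 1 ∈ p.support := by
  obtain ⟨x, h, q, rfl⟩ := Walk.not_nil_iff.mp (Walk.not_nil_of_ne (p := p) hne)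
  rw [Walk.getVert_cons_succ, Walk.getVert_zero, Walk.support_cons]
  exact List.mem_cons_of_mem _ q.start_mem_support

lemma eq_of_snd_eq_end {V : Type*} {G : SimpleGraph V} {u w : V} (hne : u ≠ w)
    (p q : G.Path u w) (hp : p.1.getVert 1 = w) (hq : q.1.getVert 1 = w) : p = q := by
  have key : ∀ r : G.Path u w, r.1.getVert 1 = w →
      ∃ h : G.Adj u w, r.1 = Walk.cons h Walk.nil := by
    rintro ⟨r, hr⟩ hsnd
    obtain ⟨x, h, r', rfl⟩ := Walk.not_nil_iff.mp (Walk.not_nil_of_ne (p := r) hne)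
    rw [Walk.getVert_cons_succ, Walk.getVert_zero] at hsnd
    subst hsnd
    have hr' : r'.IsPath := hr.of_cons
    have heq : (⟨r', hr'⟩ : G.Path x x) = SimpleGraph.Path.nil := SimpleGraph.Path.loop_eq _
    have hnil : r' = Walk.nil := congrArg Subtype.val heq
    subst hnil
    exact ⟨h, rfl⟩
  obtain ⟨h1, e1⟩ := key p hp
  obtain ⟨h2, e2⟩ := key q hq
  exact Subtype.ext (e1.trans e2.symm)

lemma card_le_degree {V : Type*} [Fintype V] {G : SimpleGraph V} [DecidableRel G.Adj]
    {u w : V} (hne : u ≠ w) (Ps : Finset (G.Path u w))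
    (hdisj : ∀ p ∈ Ps, ∀ q ∈ Ps, p ≠ q → ∀ x : V,
        x ∈ p.1.support → x ∈ q.1.support → x = u ∨ x = w) :
    Ps.card ≤ G.degree u := by
  rw [← card_neighborFinset_eq_degree]
  apply Finset.card_le_card_of_injOn (fun p => p.1.getVert 1)
  · intro p _
    rw [Finset.mem_coe, mem_neighborFinset]
    exact snd_adj hne p.1
  · intro p hp q hq hfq
    by_contra hpq
    have hfq' : p.1.getVert 1 = q.1.getVert 1 := hfq
    have hx2 : p.1.getVert 1 ∈ q.1.support := by
      rw [hfq']; exact snd_mem_support hne q.1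
    rcases hdisj p hp q hq hpq _ (snd_mem_support hne p.1) hx2 with h | h
    · exact G.irrefl (h ▸ snd_adj hne p.1)
    · exact hpq (eq_of_snd_eq_end hne p q h (hfq'.symm.trans h))

lemma localConn_le_degree {V : Type*} [Fintype V] (G : SimpleGraph V) [DecidableRel G.Adj]
    {u w : V} (hne : u ≠ w) : localConn G u w ≤ (G.degree u : ℕ∞) := by
  rw [localConn_eq G hne]
  apply sSup_le
  rintro n ⟨Ps, hdisj, rfl⟩
  exact_mod_cast card_le_degree hne Ps hdisj

lemma pset_subset {V : Type*} (G : SimpleGraph V) (a b : V) : pset G a b ⊆ pset G b a := by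
  classical
  rintro n ⟨Ps, hdisj, rfl⟩
  have hrr : ∀ r : G.Path a b, r.reverse.reverse = r := fun r =>
    Subtype.ext (Walk.reverse_reverse r.1)
  have hinj : Function.Injective (fun p : G.Path a b => p.reverse) := by
    intro p q h
    have := congrArg (fun r : G.Path b a => r.reverse) h
    simpa [hrr] using this
  refine ⟨Ps.image (fun p => p.reverse), ?_, ?_⟩
  · rintro p' hp' q' hq' hne x hxp hxq
    simp only [Finset.mem_image] at hp' hq'
    obtain ⟨p, hp, rfl⟩ := hp'
    obtain ⟨q, hq, rfl⟩ := hq'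
    have hpq : p ≠ q := fun h => hne (by rw [h])
    have hxp' : x ∈ p.1.support := by
      have : x ∈ p.1.reverse.support := hxp
      rwa [Walk.support_reverse, List.mem_reverse] at this
    have hxq' : x ∈ q.1.support := by
      have : x ∈ q.1.reverse.support := hxq
      rwa [Walk.support_reverse, List.mem_reverse] at this
    exact (hdisj p hp q hq hpq x hxp' hxq').symm
  · rw [Finset.card_image_of_injective _ hinj]

lemma localConn_comm {V : Type*} (G : SimpleGraph V) (a b : V) :
    localConn G a b = localConn G b a := by
  by_cases h : a = b
  · subst h; rfl
  · rw [localConn_eq G h, localConn_eq G (Ne.symm h)]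
    congr 1
    exact le_antisymm (pset_subset G a b) (pset_subset G b a)

lemma one_mem_pset {V : Type*} {G : SimpleGraph V} {u w : V} (h : G.Reachable u w) :
    (1 : ℕ∞) ∈ pset G u w := by
  classical
  obtain ⟨p⟩ := h
  refine ⟨{p.toPath}, ?_, by simp⟩
  intro p' hp' q' hq' hne' x _ _
  simp only [Finset.mem_singleton] at hp' hq'
  exact absurd (hp'.trans hq'.symm) hne'

lemma one_le_localConn {V : Type*} (G : SimpleGraph V) {u w : V} (hne : u ≠ w)
    (h : G.Reachable u w) : 1 ≤ localConn G u w := by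
  rw [localConn_eq G hne]
  exact le_sSup (one_mem_pset h)

lemma two_mem_pset {V : Type*} {G : SimpleGraph V} {u m w : V}
    (huw : G.Adj u w) (hum : G.Adj u m) (hmw : G.Adj m w) : (2 : ℕ∞) ∈ pset G u w := by
  classical
  have h1 : u ≠ m := hum.ne
  have h2 : u ≠ w := huw.ne
  have h3 : m ≠ w := hmw.ne
  set p1 : G.Path u w := ⟨Walk.cons huw Walk.nil, by simp [h2]⟩ with hp1
  set p2 : G.Path u w := ⟨Walk.cons hum (Walk.cons hmw Walk.nil), by
    simp [Walk.isPath_def, h1, h2, h3]⟩ with hp2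
  have hne12 : p1 ≠ p2 := by
    intro h
    have := congrArg (fun r : G.Path u w => r.1.support) h
    simp [hp1, hp2] at this
  have hsupp1 : ∀ x : V, x ∈ p1.1.support → x = u ∨ x = w := by
    intro x hx
    simpa [hp1] using hx
  refine ⟨{p1, p2}, ?_, ?_⟩
  · intro p hp q hq hpq x hxp hxq
    rcases Finset.mem_insert.mp hp with rfl | hp
    · exact hsupp1 x hxp
    · rcases Finset.mem_insert.mp hq with rfl | hq
      · exact hsupp1 x hxq
      · rw [Finset.mem_singleton] at hp hq
        exact absurd (hp.trans hq.symm) hpq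
  · rw [Finset.card_insert_of_notMem (by simpa using hne12), Finset.card_singleton]
    rfl

lemma two_le_localConn {V : Type*} (G : SimpleGraph V) {u m w : V}
    (huw : G.Adj u w) (hum : G.Adj u m) (hmw : G.Adj m w) : 2 ≤ localConn G u w := by
  rw [localConn_eq G huw.ne]
  exact le_sSup (two_mem_pset huw hum hmw)

lemma adj_of_degree_eq {V : Type*} [Fintype V] {G : SimpleGraph V} [DecidableRel G.Adj]
    {w : V} (hd : G.degree w = Fintype.card V - 1) {x : V} (hx : x ≠ w) : G.Adj w x := by
  classical
  have hsub : G.neighborFinset w ⊆ Finset.univ.erase w := by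
    intro y hy
    rw [mem_neighborFinset] at hy
    exact Finset.mem_erase.mpr ⟨hy.ne', Finset.mem_univ y⟩
  have hcard : (Finset.univ.erase w).card = Fintype.card V - 1 := by
    rw [Finset.card_erase_of_mem (Finset.mem_univ w), Finset.card_univ]
  have heq := Finset.eq_of_subset_of_card_le hsub
    (by rw [hcard, ← hd, card_neighborFinset_eq_degree])
  have : x ∈ G.neighborFinset w := by
    rw [heq]
    exact Finset.mem_erase.mpr ⟨hx, Finset.mem_univ x⟩
  rwa [mem_neighborFinset] at this

/-- a finite connected graph has connectivity dimension one iff it is `K₂`. -/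
theorem stmt1 {V : Type*} [Fintype V] (G : SimpleGraph V) (hG : G.Connected) :
    cdim G = 1 ↔ Nonempty (G ≃g completeGraph (Fin 2)) := by
  classical
  constructor
  · intro hcd
    unfold cdim at hcd
    have hSne : {n : ℕ | ∃ W : Set V, ConnResolving G W ∧ W.ncard = n}.Nonempty := by
      by_contra h
      rw [Set.not_nonempty_iff_eq_empty] at h
      rw [h, Nat.sInf_empty] at hcd
      exact one_ne_zero hcd.symm
    have h1S := Nat.sInf_mem hSne
    rw [hcd] at h1S
    obtain ⟨W, hWres, hW1⟩ := h1S
    have h0S : ¬ ∃ W : Set V, ConnResolving G W ∧ W.ncard = 0 := by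
      intro h
      have h0 : sInf {n : ℕ | ∃ W : Set V, ConnResolving G W ∧ W.ncard = n} = 0 :=
        Nat.sInf_eq_zero.mpr (Or.inl h)
      rw [hcd] at h0
      exact one_ne_zero h0
    have hemp : ¬ ConnResolving G (∅ : Set V) := fun h => h0S ⟨∅, h, Set.ncard_empty V⟩
    have hex : ∃ a b : V, a ≠ b := by
      by_contra h
      push_neg at h
      exact hemp (fun u v _ => h u v)
    obtain ⟨a0, b0, hab0⟩ := hex
    have hcard2 : 2 ≤ Fintype.card V :=
      Fintype.one_lt_card_iff_nontrivial.mpr ⟨⟨a0, b0, hab0⟩⟩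
    obtain ⟨w, rfl⟩ := Set.ncard_eq_one.mp hW1
    have hres : ∀ u v : V, localConn G u w = localConn G v w → u = v := by
      intro u v h
      refine hWres u v ?_
      intro x hx
      rw [Set.mem_singleton_iff] at hx
      subst hx
      exact h
    have hfin : ∀ u : V, u ≠ w → localConn G u w ≠ ⊤ := by
      intro u hu
      exact ((localConn_le_degree G hu).trans_lt (WithTop.coe_lt_top _)).ne
    have hn2 : Fintype.card V = 2 := by
      by_contra hne2
      have h3 : 3 ≤ Fintype.card V := by omega
      have hinj : Set.InjOn (fun u : V => (localConn G u w).toNat)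
          (Finset.univ.erase w) := by
        intro u hu v hv hfe
        simp only [Finset.coe_erase, Set.mem_diff, Set.mem_singleton_iff] at hu hv
        have hu' : u ≠ w := hu.2
        have hv' : v ≠ w := hv.2
        apply hres
        rw [← ENat.coe_toNat (hfin u hu'), ← ENat.coe_toNat (hfin v hv')]
        exact_mod_cast hfe
      have hmaps : ∀ u ∈ Finset.univ.erase w,
          (localConn G u w).toNat ∈ Finset.Icc 1 (G.degree w) := by
        intro u hu
        have hu' : u ≠ w := (Finset.mem_erase.mp hu).1
        have hlb : (1 : ℕ∞) ≤ localConn G u w :=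
          one_le_localConn G hu' (hG.preconnected u w)
        have hub : localConn G u w ≤ (G.degree w : ℕ∞) := by
          rw [localConn_comm]
          exact localConn_le_degree G (Ne.symm hu')
        rw [← ENat.coe_toNat (hfin u hu')] at hlb hub
        rw [Finset.mem_Icc]
        exact ⟨by exact_mod_cast hlb, by exact_mod_cast hub⟩
      have hscard : (Finset.univ.erase w).card = Fintype.card V - 1 := by
        rw [Finset.card_erase_of_mem (Finset.mem_univ w), Finset.card_univ]
      have hIcc : (Finset.Icc 1 (G.degree w)).card = G.degree w := by
        rw [Nat.card_Icc]
        omega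
      have hcle := Finset.card_le_card_of_injOn _ hmaps hinj
      have hdlt := G.degree_lt_card_verts w
      have hdeq : G.degree w = Fintype.card V - 1 := by omega
      have himg : (Finset.univ.erase w).image (fun u : V => (localConn G u w).toNat)
          = Finset.Icc 1 (G.degree w) := by
        apply Finset.eq_of_subset_of_card_le (Finset.image_subset_iff.mpr hmaps)
        rw [Finset.card_image_of_injOn hinj]
        omega
      have h1mem : 1 ∈ (Finset.univ.erase w).image
          (fun u : V => (localConn G u w).toNat) := by
        rw [himg, Finset.mem_Icc]
        omega
      have hdmem : G.degree w ∈ (Finset.univ.erase w).image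
          (fun u : V => (localConn G u w).toNat) := by
        rw [himg, Finset.mem_Icc]
        omega
      obtain ⟨u0, hu0s, hfu0⟩ := Finset.mem_image.mp h1mem
      obtain ⟨u1, hu1s, hfu1⟩ := Finset.mem_image.mp hdmem
      have hu0w : u0 ≠ w := (Finset.mem_erase.mp hu0s).1
      have hu1w : u1 ≠ w := (Finset.mem_erase.mp hu1s).1
      have hu01 : u0 ≠ u1 := by
        intro h
        rw [h, hfu1] at hfu0
        omega
      have hlc1 : localConn G u1 w = (G.degree w : ℕ∞) := by
        rw [← ENat.coe_toNat (hfin u1 hu1w), hfu1]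
      have hdu1 : G.degree u1 = Fintype.card V - 1 := by
        have hub : (G.degree w : ℕ∞) ≤ (G.degree u1 : ℕ∞) := by
          rw [← hlc1]
          exact localConn_le_degree G hu1w
        have h1 : G.degree w ≤ G.degree u1 := by exact_mod_cast hub
        have h2 := G.degree_lt_card_verts u1
        omega
      have hadj0w : G.Adj u0 w := (adj_of_degree_eq hdeq hu0w).symm
      have hadj01 : G.Adj u0 u1 := (adj_of_degree_eq hdu1 hu01).symm
      have hadj1w : G.Adj u1 w := (adj_of_degree_eq hdeq hu1w).symm
      have h2le : 2 ≤ localConn G u0 w := two_le_localConn G hadj0w hadj01 hadj1w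
      have hlc0 : localConn G u0 w = 1 := by
        rw [← ENat.coe_toNat (hfin u0 hu0w), hfu0]
        rfl
      rw [hlc0] at h2le
      exact absurd h2le (by decide)
    have huniv : ∀ x : V, x = a0 ∨ x = b0 := by
      intro x
      by_contra hx
      push_neg at hx
      have hc3 : ({x, a0, b0} : Finset V).card = 3 := by
        rw [Finset.card_insert_of_notMem (by simp [hx.1, hx.2]), Finset.card_pair hab0]
      have hle := Finset.card_le_univ ({x, a0, b0} : Finset V)
      rw [hc3] at hle
      omega
    have hab_adj : G.Adj a0 b0 := by
      obtain ⟨p⟩ := hG.preconnected a0 b0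
      obtain ⟨x, h, q, rfl⟩ := Walk.not_nil_iff.mp (Walk.not_nil_of_ne (p := p) hab0)
      rcases huniv x with rfl | rfl
      · exact absurd h G.irrefl
      · exact h
    have hadj_iff : ∀ x y : V, G.Adj x y ↔ x ≠ y := by
      intro x y
      constructor
      · exact Adj.ne
      · intro hxy
        rcases huniv x with rfl | rfl <;> rcases huniv y with rfl | rfl
        · exact absurd rfl hxy
        · exact hab_adj
        · exact hab_adj.symm
        · exact absurd rfl hxy
    let e := Fintype.equivFinOfCardEq hn2
    refine ⟨⟨e, ?_⟩⟩
    intro x y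
    show e x ≠ e y ↔ G.Adj x y
    rw [hadj_iff]
    exact e.injective.ne_iff
  · rintro ⟨φ⟩
    have hab : φ.symm 0 ≠ φ.symm 1 := by
      intro h
      have h01 : (0 : Fin 2) = 1 := by
        have := congrArg φ h
        rwa [φ.apply_symm_apply, φ.apply_symm_apply] at this
      exact absurd h01 (by decide)
    have hall : ∀ x : V, x = φ.symm 0 ∨ x = φ.symm 1 := by
      intro x
      have h2 : ∀ j : Fin 2, j = 0 ∨ j = 1 := by decide
      rcases h2 (φ x) with h | h
      · left
        have := congrArg φ.symm h
        rwa [φ.symm_apply_apply] at this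
      · right
        have := congrArg φ.symm h
        rwa [φ.symm_apply_apply] at this
    have hfin1 : localConn G (φ.symm 1) (φ.symm 0) ≠ ⊤ :=
      ((localConn_le_degree G (Ne.symm hab)).trans_lt (WithTop.coe_lt_top _)).ne
    have hres : ConnResolving G {φ.symm 0} := by
      intro u v h
      have h' := h (φ.symm 0) (Set.mem_singleton _)
      rcases hall u with rfl | rfl <;> rcases hall v with rfl | rfl
      · rfl
      · rw [localConn_self] at h'
        exact absurd h'.symm hfin1
      · rw [localConn_self] at h'
        exact absurd h' hfin1
      · rfl
    have h1S : 1 ∈ {n : ℕ | ∃ W : Set V, ConnResolving G W ∧ W.ncard = n} :=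
      ⟨{φ.symm 0}, hres, Set.ncard_singleton _⟩
    have hle : cdim G ≤ 1 := Nat.sInf_le h1S
    have hne0 : cdim G ≠ 0 := by
      intro h0
      unfold cdim at h0
      have hmem := Nat.sInf_mem (⟨1, h1S⟩ :
        {n : ℕ | ∃ W : Set V, ConnResolving G W ∧ W.ncard = n}.Nonempty)
      rw [h0] at hmem
      obtain ⟨W, hW, hW0⟩ := hmem
      have hWe : W = ∅ := (Set.ncard_eq_zero (Set.toFinite W)).mp hW0
      subst hWe
      exact hab (hW _ _ (by simp))
    omega


end ConnDim
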